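/- (Sinclair's stability lemma) Let φ : A → B be a surjective algebra homomorphism between Banach algebras with separating space S(φ), and let (Bₙ)_{n∈ℕ} be any sequence in B. Then there exists n₀ ∈ ℕ such that for all n ≥ n₀, the closure of B₁B₂⋯Bₙ · S(φ) equals the closure of B₁B₂⋯B_{n+1} · S(φ). -/

import Mathlib

open Filter Metric Topology

section aux
variable {E F : Type*} [NormedAddCommGroup E] [NormedSpace ℂ E]
  [NormedAddCommGroup F] [NormedSpace ℂ F]

noncomputable def sepS (T : E →ₗ[ℂ] F) : Submodule ℂ F :=
  (T.graph.topologicalClosure).comap (LinearMap.inr ℂ E F)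

lemma mem_sepS {T : E →ₗ[ℂ] F} {b : F} :
    b ∈ sepS T ↔ ∃ u : ℕ → E, Tendsto u atTop (𝓝 0) ∧
      Tendsto (fun k => T (u k)) atTop (𝓝 b) := by
  have hmem : b ∈ sepS T ↔ ((0 : E), b) ∈ closure (T.graph : Set (E × F)) := by
    rw [sepS, Submodule.mem_comap]; rfl
  rw [hmem, mem_closure_iff_seq_limit]
  constructor
  · rintro ⟨x, hx, hlim⟩
    refine ⟨fun k => (x k).1, ((continuous_fst.tendsto _).comp hlim), ?_⟩
    have : (fun k => T ((x k).1)) = fun k => (x k).2 := by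
      funext k; exact ((LinearMap.mem_graph_iff _ _).1 (hx k)).symm
    rw [this]
    exact (continuous_snd.tendsto _).comp hlim
  · rintro ⟨u, hu, hTu⟩
    exact ⟨fun k => (u k, T (u k)), fun k => (LinearMap.mem_graph_iff _ _).2 rfl,
      hu.prodMk_nhds hTu⟩

lemma sepS_isClosed (T : E →ₗ[ℂ] F) : IsClosed (sepS T : Set F) := by
  have : (sepS T : Set F) = (fun b => ((0 : E), b)) ⁻¹' closure (T.graph : Set (E × F)) := by
    ext b; exact ⟨fun hb => hb, fun hb => hb⟩
  rw [this]
  exact isClosed_closure.preimage (continuous_const.prodMk continuous_id)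

lemma infDist_le_norm (W : Submodule ℂ F) (x : F) : infDist x (W : Set F) ≤ ‖x‖ := by
  simpa [dist_eq_norm] using infDist_le_dist_of_mem (W.zero_mem)

lemma infDist_add_le_norm_add (W : Submodule ℂ F) (x y : F) :
    infDist (x + y) (W : Set F) ≤ ‖x‖ + infDist y (W : Set F) := by
  refine le_of_forall_pos_le_add ?_
  intro ε hε
  obtain ⟨g, hg, hdg⟩ := (infDist_lt_iff ⟨0, W.zero_mem⟩).1
    (lt_add_of_pos_right (infDist y (W : Set F)) hε)
  calc infDist (x + y) (W : Set F) ≤ dist (x + y) g := infDist_le_dist_of_mem hg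
    _ ≤ ‖x‖ + dist y g := by
        rw [dist_eq_norm, dist_eq_norm, show x + y - g = x + (y - g) by abel]
        exact norm_add_le _ _
    _ ≤ ‖x‖ + (infDist y (W : Set F) + ε) := by linarith
    _ = ‖x‖ + infDist y (W : Set F) + ε := by ring

lemma infDist_add_le_add (W : Submodule ℂ F) (x y : F) :
    infDist (x + y) (W : Set F) ≤ infDist x (W : Set F) + infDist y (W : Set F) := by
  refine le_of_forall_pos_le_add ?_
  intro ε hε
  obtain ⟨f, hf, hdf⟩ := (infDist_lt_iff ⟨0, W.zero_mem⟩).1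
    (lt_add_of_pos_right (infDist x (W : Set F)) (half_pos hε))
  obtain ⟨g, hg, hdg⟩ := (infDist_lt_iff ⟨0, W.zero_mem⟩).1
    (lt_add_of_pos_right (infDist y (W : Set F)) (half_pos hε))
  calc infDist (x + y) (W : Set F) ≤ dist (x + y) (f + g) :=
        infDist_le_dist_of_mem (W.add_mem hf hg)
    _ ≤ dist x f + dist y g := by
        rw [dist_eq_norm, dist_eq_norm, dist_eq_norm,
          show x + y - (f + g) = (x - f) + (y - g) by abel]
        exact norm_add_le _ _
    _ ≤ _ := by linarith

lemma infDist_neg_eq (W : Submodule ℂ F) (x : F) :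
    infDist (-x) (W : Set F) = infDist x (W : Set F) := by
  have key : ∀ z : F, infDist (-z) (W : Set F) ≤ infDist z (W : Set F) := by
    intro z
    refine le_of_forall_pos_le_add ?_
    intro ε hε
    obtain ⟨f, hf, hdf⟩ := (infDist_lt_iff ⟨0, W.zero_mem⟩).1
      (lt_add_of_pos_right (infDist z (W : Set F)) hε)
    calc infDist (-z) (W : Set F) ≤ dist (-z) (-f) := infDist_le_dist_of_mem (W.neg_mem hf)
      _ = dist z f := by
          rw [dist_eq_norm, dist_eq_norm, show -z - -f = -(z - f) by abel, norm_neg]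
      _ ≤ _ := hdf.le
  refine le_antisymm (key x) ?_
  have := key (-x)
  rwa [neg_neg] at this

lemma infDist_smul_ge (W : Submodule ℂ F) (x : F) {r : ℝ} (hr : 0 < r) :
    r * infDist x (W : Set F) ≤ infDist ((r : ℂ) • x) (W : Set F) := by
  by_contra hlt
  push_neg at hlt
  obtain ⟨y, hy, hdy⟩ := (infDist_lt_iff ⟨0, W.zero_mem⟩).1 hlt
  have hy' : ((r : ℂ)⁻¹) • y ∈ W := W.smul_mem _ hy
  have h1 : infDist x (W : Set F) ≤ dist x (((r : ℂ)⁻¹) • y) := infDist_le_dist_of_mem hy'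
  have h2 : dist ((r : ℂ) • x) y = r * dist x (((r : ℂ)⁻¹) • y) := by
    rw [dist_eq_norm, dist_eq_norm]
    have hrne : (r : ℂ) ≠ 0 := by exact_mod_cast hr.ne'
    have : (r : ℂ) • x - y = (r : ℂ) • (x - ((r : ℂ)⁻¹) • y) := by
      rw [smul_sub, smul_inv_smul₀ hrne]
    rw [this, norm_smul]
    simp [Complex.norm_real, abs_of_pos hr]
  nlinarith [hr.le, dist_nonneg (x := x) (y := ((r : ℂ)⁻¹) • y)]

lemma sep_bound [CompleteSpace E] [CompleteSpace F] (T : E →ₗ[ℂ] F) :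
    ∃ C : ℝ, 0 < C ∧ ∀ x : E, infDist (T x) (sepS T : Set F) ≤ C * ‖x‖ := by
  set G : Submodule ℂ (E × F) := T.graph.topologicalClosure with hG
  haveI : CompleteSpace G :=
    (Submodule.isClosed_topologicalClosure T.graph).completeSpace_coe
  set f : G →L[ℂ] E := (ContinuousLinearMap.fst ℂ E F).comp G.subtypeL with hf
  have hsurj : Function.Surjective f := by
    intro x
    exact ⟨⟨(x, T x), Submodule.le_topologicalClosure _ ((LinearMap.mem_graph_iff _ _).2 rfl)⟩, rfl⟩
  obtain ⟨C, hC, hCb⟩ := ContinuousLinearMap.exists_preimage_norm_le f hsurj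
  refine ⟨C, hC, fun x => ?_⟩
  obtain ⟨g, hgx, hgn⟩ := hCb x
  have hmem : (g : E × F).2 - T x ∈ sepS T := by
    have h1 : ((g : E × F)) - (x, T x) ∈ G :=
      G.sub_mem g.2 (Submodule.le_topologicalClosure _ ((LinearMap.mem_graph_iff _ _).2 rfl))
    have h2 : ((g : E × F)) - (x, T x) = ((0 : E), (g : E × F).2 - T x) := by
      have : (g : E × F).1 = x := hgx
      ext <;> simp [this]
    rw [h2] at h1
    exact h1
  have hmem' : T x - (g : E × F).2 ∈ sepS T := by
    have := (sepS T).neg_mem hmem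
    simpa using this
  calc infDist (T x) (sepS T : Set F) ≤ dist (T x) (T x - (g : E × F).2) :=
        infDist_le_dist_of_mem hmem'
    _ = ‖(g : E × F).2‖ := by
        rw [dist_eq_norm, show T x - ((T x) - (g : E × F).2) = (g : E × F).2 by abel]
    _ ≤ ‖(g : E × F)‖ := norm_snd_le _
    _ = ‖g‖ := rfl
    _ ≤ C * ‖x‖ := hgn

noncomputable def Qc (M : ℕ → E →L[ℂ] E) (m : ℕ) : ℕ → E →L[ℂ] E
  | 0 => ContinuousLinearMap.id ℂ E
  | (k+1) => (Qc M m k).comp (M (m+k))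

lemma Qc_succ (M : ℕ → E →L[ℂ] E) (m k : ℕ) :
    Qc M m (k+1) = (Qc M m k).comp (M (m+k)) := rfl

lemma Qc_add (M : ℕ → E →L[ℂ] E) (l k₁ k₂ : ℕ) :
    Qc M l (k₁ + k₂) = (Qc M l k₁).comp (Qc M (l + k₁) k₂) := by
  induction k₂ with
  | zero => rfl
  | succ k ih =>
      show Qc M l ((k₁ + k) + 1) = _
      rw [Qc, ih, Qc]
      ext x
      simp [ContinuousLinearMap.comp_apply, add_assoc]

lemma sepS_comp_le (T' : E →ₗ[ℂ] F) (R : E →L[ℂ] E) :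
    sepS (T' ∘ₗ (R : E →ₗ[ℂ] E)) ≤ sepS T' := by
  intro b hb
  obtain ⟨u, hu, hTu⟩ := mem_sepS.1 hb
  refine mem_sepS.2 ⟨fun k => R (u k), ?_, hTu⟩
  have := (R.continuous.tendsto 0).comp hu
  simpa [Function.comp_def] using this

lemma nat_rec_choice {σ : Type*} (init : σ) (R : ℕ → σ → σ → Prop)
    (h : ∀ j st, ∃ st', R j st st') :
    ∃ g : ℕ → σ, R 0 init (g 0) ∧ ∀ j, R (j+1) (g j) (g (j+1)) := by
  choose f hf using h
  exact ⟨fun j => Nat.rec (f 0 init) (fun j' prev => f (j'+1) prev) j,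
    hf 0 init, fun j => hf (j+1) _⟩

theorem stab [CompleteSpace E] [CompleteSpace F] (T : E →ₗ[ℂ] F) (M : ℕ → E →L[ℂ] E) :
    ∃ N : ℕ, ∀ n, N ≤ n →
      sepS (T ∘ₗ ((Qc M 0 (n+1) : E →L[ℂ] E) : E →ₗ[ℂ] E)) =
      sepS (T ∘ₗ ((Qc M 0 n : E →L[ℂ] E) : E →ₗ[ℂ] E)) := by
  set TL : ℕ → E →ₗ[ℂ] F := fun n => T ∘ₗ ((Qc M 0 n : E →L[ℂ] E) : E →ₗ[ℂ] E) with hTL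
  set Sig : ℕ → Submodule ℂ F := fun n => sepS (TL n) with hSig
  have hanti : ∀ n, Sig (n+1) ≤ Sig n := by
    intro n
    have he : TL (n+1) = (TL n) ∘ₗ ((M n : E →L[ℂ] E) : E →ₗ[ℂ] E) := by
      have : Qc M 0 (n+1) = (Qc M 0 n).comp (M n) := by
        rw [Qc_succ, zero_add]
      rw [hTL]
      simp only [this, ContinuousLinearMap.coe_comp]
      rfl
    rw [hSig]
    simp only [he]
    exact sepS_comp_le (TL n) (M n)
  by_contra hcon
  push_neg at hcon
  -- hcon : ∀ N, ∃ n, N ≤ n ∧ Sig (n+1) ≠ Sig n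
  choose C hCpos hC using fun n => sep_bound (TL n)
  have hEx : ∀ (N jj : ℕ) (M₀ : ℝ), ∃ n a, N ≤ n ∧
      (∀ m k, m + k = n → ‖Qc M m k a‖ ≤ (1/2 : ℝ)^jj) ∧
      M₀ + C (n+1) ≤ infDist (TL n a) (Sig (n+1) : Set F) := by
    intro N jj M₀
    obtain ⟨n, hnN, hne⟩ := hcon N
    refine ⟨n, ?_⟩
    obtain ⟨s, hsn, hsn1⟩ := SetLike.exists_of_lt (lt_of_le_of_ne (hanti n) hne)
    have hd : 0 < infDist s (Sig (n+1) : Set F) :=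
      ((sepS_isClosed (TL (n+1))).notMem_iff_infDist_pos
        ⟨0, (Sig (n+1)).zero_mem⟩).1 hsn1
    set d := infDist s (Sig (n+1) : Set F) with hdd
    obtain ⟨u, hu, hTu⟩ := mem_sepS.1 hsn
    set μ : ℝ := (∑ m ∈ Finset.range (n+1), ‖Qc M m (n - m)‖) + 1 with hμdef
    have hμpos : 0 < μ := by
      have : (0:ℝ) ≤ ∑ m ∈ Finset.range (n+1), ‖Qc M m (n - m)‖ :=
        Finset.sum_nonneg (fun i _ => norm_nonneg _)
      linarith
    have hμ : ∀ m k, m + k = n → ‖Qc M m k‖ ≤ μ := by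
      intro m k hmk
      have hm : m ∈ Finset.range (n+1) := by
        simp only [Finset.mem_range]; omega
      have hs := Finset.single_le_sum
        (f := fun m => ‖Qc M m (n - m)‖) (fun i _ => norm_nonneg _) hm
      have hnm : n - m = k := by omega
      simp only [hnm] at hs
      linarith
    set M' : ℝ := max (M₀ + C (n+1)) 1 with hM'def
    have hM' : (0:ℝ) < M' := lt_of_lt_of_le one_pos (le_max_right _ _)
    set r : ℝ := M' / (d/2) with hrdef
    have hr : 0 < r := div_pos hM' (by linarith)
    have h1 : ∀ᶠ k in atTop, ‖u k‖ < ((1/2 : ℝ)^jj / μ) / r := by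
      have h0 : Tendsto (fun k => ‖u k‖) atTop (𝓝 0) := by
        simpa using hu.norm
      have hpos : (0:ℝ) < ((1/2 : ℝ)^jj / μ) / r := by positivity
      exact h0.eventually_lt_const hpos
    have h2 : ∀ᶠ k in atTop, dist (TL n (u k)) s < d/2 :=
      (Metric.tendsto_nhds.mp hTu) (d/2) (by linarith)
    obtain ⟨k, hk1, hk2⟩ := (h1.and h2).exists
    refine ⟨(r:ℂ) • u k, hnN, ?_, ?_⟩
    · intro m k' hmk'
      have hb1 : ‖Qc M m k' ((r:ℂ) • u k)‖ ≤ ‖Qc M m k'‖ * ‖(r:ℂ) • u k‖ :=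
        (Qc M m k').le_opNorm _
      have hb2 : ‖(r:ℂ) • u k‖ = r * ‖u k‖ := by
        rw [norm_smul]; simp [abs_of_pos hr]
      have hb3 : r * ‖u k‖ ≤ (1/2 : ℝ)^jj / μ := by
        have h5 := hk1
        rw [div_div] at h5
        have h6 : r * ‖u k‖ ≤ r * ((1/2 : ℝ)^jj / (μ * r)) :=
          mul_le_mul_of_nonneg_left h5.le hr.le
        have h7 : r * ((1/2 : ℝ)^jj / (μ * r)) = (1/2 : ℝ)^jj / μ := by
          field_simp
        linarith
      calc ‖Qc M m k' ((r:ℂ) • u k)‖ ≤ ‖Qc M m k'‖ * ‖(r:ℂ) • u k‖ := hb1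
        _ ≤ μ * ((1/2 : ℝ)^jj / μ) := by
            rw [hb2]
            have h8 := hμ m k' hmk'
            have hru : 0 ≤ r * ‖u k‖ := mul_nonneg hr.le (norm_nonneg _)
            calc ‖Qc M m k'‖ * (r * ‖u k‖) ≤ μ * (r * ‖u k‖) :=
                  mul_le_mul_of_nonneg_right h8 hru
              _ ≤ μ * ((1/2 : ℝ)^jj / μ) := mul_le_mul_of_nonneg_left hb3 hμpos.le
        _ = (1/2 : ℝ)^jj := by field_simp
    · have hsmul : TL n ((r:ℂ) • u k) = (r:ℂ) • TL n (u k) := map_smul _ _ _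
      have hge := infDist_smul_ge (Sig (n+1)) (TL n (u k)) hr
      have hlow : d/2 ≤ infDist (TL n (u k)) (Sig (n+1) : Set F) := by
        have hid := infDist_le_infDist_add_dist (x := s) (y := TL n (u k))
          (s := (Sig (n+1) : Set F))
        rw [dist_comm] at hid
        rw [← hdd] at hid
        linarith
      rw [hsmul]
      have hrd : r * (d/2) = M' := by
        rw [hrdef]; field_simp
      have : M' ≤ infDist ((r:ℂ) • TL n (u k)) (Sig (n+1) : Set F) := by
        calc M' = r * (d/2) := hrd.symm
          _ ≤ r * infDist (TL n (u k)) (Sig (n+1) : Set F) :=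
              mul_le_mul_of_nonneg_left hlow hr.le
          _ ≤ _ := hge
      calc M₀ + C (n+1) ≤ M' := le_max_left _ _
        _ ≤ _ := this
  -- recursive construction
  obtain ⟨g, hg0, hgs⟩ := nat_rec_choice ((0:ℕ), (0:E), (0:ℝ))
    (fun j st st' => st.1 + 1 ≤ st'.1 ∧
      (∀ m k, m + k = st'.1 → ‖Qc M m k st'.2.1‖ ≤ (1/2 : ℝ)^j) ∧
      ((j:ℝ) + st.2.2 + 1 + C (st'.1+1) ≤ infDist (TL st'.1 st'.2.1) (Sig (st'.1+1) : Set F)) ∧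
      st'.2.2 = st.2.2 + ‖TL st'.1 st'.2.1‖)
    (by
      intro j st
      obtain ⟨n, a, h1, h2, h3⟩ := hEx (st.1+1) j ((j:ℝ) + st.2.2 + 1)
      exact ⟨(n, a, st.2.2 + ‖TL n a‖), h1, h2, h3, rfl⟩)
  set nn : ℕ → ℕ := fun j => (g j).1 with hnn
  set aa : ℕ → E := fun j => (g j).2.1 with haa
  set PS : ℕ → ℝ := fun j => ∑ k ∈ Finset.range j, ‖TL (nn k) (aa k)‖ with hPS
  have hbnd : ∀ j m k, m + k = nn j → ‖Qc M m k (aa j)‖ ≤ (1/2 : ℝ)^j := by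
    intro j
    cases j with
    | zero => exact hg0.2.1
    | succ j' => exact (hgs j').2.1
  have hmono1 : ∀ j, nn j + 1 ≤ nn (j+1) := fun j => (hgs j).1
  have hacc : ∀ j, (g j).2.2 = PS (j+1) := by
    intro j
    induction j with
    | zero =>
        rw [hPS]
        simp only [Finset.sum_range_one]
        rw [hg0.2.2.2]
        simp
        rfl
    | succ j' ih =>
        rw [(hgs j').2.2.2, ih]
        simp only [hPS]
        rw [Finset.sum_range_succ, Finset.sum_range_succ, Finset.sum_range_succ]
  have hlow : ∀ j : ℕ, (j:ℝ) + PS j + 1 + C (nn j + 1) ≤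
      infDist (TL (nn j) (aa j)) (Sig (nn j + 1) : Set F) := by
    intro j
    cases j with
    | zero =>
        have := hg0.2.2.1
        simpa [hPS] using this
    | succ j' =>
        have := (hgs j').2.2.1
        rw [hacc j'] at this
        exact_mod_cast this
  have hmono : ∀ i i', i < i' → nn i + 1 ≤ nn i' := by
    intro i i' hii
    have key : ∀ d, nn i + 1 ≤ nn (i + 1 + d) := by
      intro d
      induction d with
      | zero => simpa using hmono1 i
      | succ d' ih =>
          have := hmono1 (i + 1 + d')
          calc nn i + 1 ≤ nn (i+1+d') := ih
            _ ≤ nn (i+1+d') + 1 := by omega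
            _ ≤ nn (i+1+d'+1) := this
          
    have : i' = i + 1 + (i' - i - 1) := by omega
    rw [this]
    exact key _
  set uu : ℕ → E := fun j => Qc M 0 (nn j) (aa j) with huudef
  have huu : ∀ j, ‖uu j‖ ≤ (1/2 : ℝ)^j := by
    intro j
    exact hbnd j 0 (nn j) (by omega)
  have hsumu : Summable uu := Summable.of_norm_bounded summable_geometric_two huu
  set y := ∑' j, uu j with hy
  have hkey : ∀ j : ℕ, (j:ℝ) + 1 ≤ ‖T y‖ := by
    intro j
    set W := (Sig (nn j + 1) : Set F) with hW
    have hidx : ∀ k : ℕ, nn j + 1 ≤ nn (k + (j+1)) := fun k => hmono j _ (by omega)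
    set kk : ℕ → ℕ := fun k => nn (k + (j+1)) - (nn j + 1) with hkk
    set w : ℕ → E := fun k => Qc M (nn j + 1) (kk k) (aa (k + (j+1))) with hwdef
    have hw : ∀ k, uu (k + (j+1)) = Qc M 0 (nn j + 1) (w k) := by
      intro k
      have hsum : (nn j + 1) + kk k = nn (k + (j+1)) := by
        have := hidx k; simp only [hkk]; omega
      have hQ := Qc_add M 0 (nn j + 1) (kk k)
      rw [zero_add] at hQ
      calc uu (k + (j+1)) = Qc M 0 (nn (k + (j+1))) (aa (k + (j+1))) := rfl
        _ = Qc M 0 ((nn j + 1) + kk k) (aa (k + (j+1))) := by rw [hsum]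
        _ = Qc M 0 (nn j + 1) (Qc M (nn j + 1) (kk k) (aa (k + (j+1)))) := by
            rw [hQ]; rfl
    have hwn : ∀ k, ‖w k‖ ≤ (1/2 : ℝ)^(k + (j+1)) := by
      intro k
      exact hbnd (k + (j+1)) (nn j + 1) (kk k) (by have := hidx k; simp only [hkk]; omega)
    have hgeo : Summable (fun k => ((1/2:ℝ))^(k + (j+1))) := by
      simpa [pow_add] using summable_geometric_two.mul_right ((1/2:ℝ)^(j+1))
    have hsumw : Summable w := Summable.of_norm_bounded hgeo hwn
    have hnormw : Summable (fun k => ‖w k‖) :=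
      Summable.of_nonneg_of_le (fun _ => norm_nonneg _) hwn hgeo
    set z := ∑' k, w k with hz
    have hzn : ‖z‖ ≤ 1 := by
      have h1 : ‖z‖ ≤ ∑' k, ‖w k‖ := norm_tsum_le_tsum_norm hnormw
      have h2 : ∑' k, ‖w k‖ ≤ ∑' k, ((1/2:ℝ))^(k+(j+1)) := Summable.tsum_le_tsum hwn hnormw hgeo
      have h3 : ∑' k, ((1/2:ℝ))^(k+(j+1)) = 2 * (1/2:ℝ)^(j+1) := by
        simp only [pow_add]
        rw [tsum_mul_right, tsum_geometric_two]
      have h4 : (2:ℝ) * (1/2:ℝ)^(j+1) ≤ 1 := by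
        have h5 : (1/2:ℝ)^(j+1) ≤ (1/2:ℝ)^1 :=
          pow_le_pow_of_le_one (by norm_num) (by norm_num) (by omega)
        norm_num at h5
        linarith
      linarith
    have htail : ∑' k, uu (k + (j+1)) = Qc M 0 (nn j + 1) z := by
      calc ∑' k, uu (k + (j+1)) = ∑' k, Qc M 0 (nn j + 1) (w k) := tsum_congr hw
        _ = Qc M 0 (nn j + 1) z := ((Qc M 0 (nn j + 1)).map_tsum hsumw).symm
    have hdec : y = (∑ k ∈ Finset.range j, uu k) + uu j + ∑' k, uu (k + (j+1)) := by
      have h1 := Summable.sum_add_tsum_nat_add (f := uu) (j+1) hsumu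
      rw [Finset.sum_range_succ] at h1
      rw [hy, ← h1]
    have hTsplit : T y = T (∑ k ∈ Finset.range j, uu k) + T (uu j) +
        T (∑' k, uu (k + (j+1))) := by
      rw [hdec, map_add, map_add]
    have e1 : infDist (T (uu j)) W ≤ ‖T (∑ k ∈ Finset.range j, uu k)‖ +
        (infDist (T y) W + infDist (T (∑' k, uu (k + (j+1)))) W) := by
      have harg : T (uu j) = (-(T (∑ k ∈ Finset.range j, uu k))) +
          (T y + (-(T (∑' k, uu (k + (j+1)))))) := by
        rw [hTsplit]; abel
      rw [harg, hW]
      calc infDist _ (Sig (nn j + 1) : Set F)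
          ≤ ‖-(T (∑ k ∈ Finset.range j, uu k))‖ +
            infDist (T y + (-(T (∑' k, uu (k + (j+1)))))) (Sig (nn j + 1) : Set F) :=
            infDist_add_le_norm_add _ _ _
        _ ≤ ‖-(T (∑ k ∈ Finset.range j, uu k))‖ +
            (infDist (T y) (Sig (nn j + 1) : Set F) +
             infDist (-(T (∑' k, uu (k + (j+1))))) (Sig (nn j + 1) : Set F)) := by
            have := infDist_add_le_add (Sig (nn j + 1)) (T y) (-(T (∑' k, uu (k + (j+1)))))
            linarith
        _ = _ := by rw [norm_neg, infDist_neg_eq]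
    have e2 : ‖T (∑ k ∈ Finset.range j, uu k)‖ ≤ PS j := by
      rw [map_sum]
      calc ‖∑ k ∈ Finset.range j, T (uu k)‖ ≤ ∑ k ∈ Finset.range j, ‖T (uu k)‖ :=
            norm_sum_le _ _
        _ = PS j := rfl
    have e3 : infDist (T (∑' k, uu (k + (j+1)))) W ≤ C (nn j + 1) * ‖z‖ := by
      rw [htail]
      exact hC (nn j + 1) z
    have e4 : C (nn j + 1) * ‖z‖ ≤ C (nn j + 1) := by
      nlinarith [hCpos (nn j + 1), norm_nonneg z]
    have e5 : infDist (T y) W ≤ ‖T y‖ := infDist_le_norm _ _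
    have e0 : (j:ℝ) + PS j + 1 + C (nn j + 1) ≤ infDist (T (uu j)) W := hlow j
    linarith
  have hc := hkey (Nat.ceil ‖T y‖)
  have := Nat.le_ceil ‖T y‖
  linarith

end aux

/-- Sinclair's stability lemma: for a surjective algebra homomorphism `φ` between Banach
algebras with separating space `S(φ)` and any sequence `(Bₙ)` in the codomain, eventually
`closure (B₁⋯Bₙ · S(φ)) = closure (B₁⋯Bₙ₊₁ · S(φ))` and similarly on the right. -/
theorem stmt7 {A B : Type*} [NormedRing A] [NormedAlgebra ℂ A] [CompleteSpace A]
    [NormedRing B] [NormedAlgebra ℂ B] [CompleteSpace B]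
    (φ : A →ₐ[ℂ] B) (hsurj : Function.Surjective φ)
    (Bseq : ℕ → B) :
    letI S : Set B := {b : B | ∃ u : ℕ → A, Filter.Tendsto u Filter.atTop (nhds 0) ∧
      Filter.Tendsto (fun k => φ (u k)) Filter.atTop (nhds b)}
    ∃ n₀ : ℕ, ∀ n ≥ n₀,
      closure ((fun s => ((List.range n).map Bseq).prod * s) '' S) =
        closure ((fun s => ((List.range (n + 1)).map Bseq).prod * s) '' S) ∧
      closure ((fun s => s * ((List.range n).map Bseq).reverse.prod) '' S) =
        closure ((fun s => s * ((List.range (n + 1)).map Bseq).reverse.prod) '' S) := by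
  set φₗ : A →ₗ[ℂ] B := φ.toLinearMap with hφₗ
  set Sset : Set B := {b : B | ∃ u : ℕ → A, Filter.Tendsto u Filter.atTop (nhds 0) ∧
      Filter.Tendsto (fun k => φ (u k)) Filter.atTop (nhds b)} with hSset
  have hSeq : Sset = (sepS φₗ : Set B) := by
    ext b
    rw [hSset, Set.mem_setOf_eq]
    exact (mem_sepS (T := φₗ) (b := b)).symm
  choose c hc using fun n => hsurj (Bseq n)
  obtain ⟨K, hK, hKb⟩ := sep_bound φₗ
  -- generic identification lemma
  have main : ∀ (M : ℕ → A →L[ℂ] A) (p : ℕ → B) (mulp : ℕ → B → B),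
      (∀ n, Continuous (mulp n)) →
      (∀ n s₁ s₂, mulp n (s₁ - s₂) = mulp n s₁ - mulp n s₂) →
      (∀ n a, φ (Qc M 0 n a) = mulp n (φ a)) →
      ∀ n, (sepS (φₗ ∘ₗ ((Qc M 0 n : A →L[ℂ] A) : A →ₗ[ℂ] A)) : Set B) =
        closure ((fun s => mulp n s) '' Sset) := by
    intro M p mulp hcont hsub hkey n
    apply Set.Subset.antisymm
    · intro b hb
      obtain ⟨u, hu, hTu⟩ := mem_sepS.1 hb
      have hTu' : Filter.Tendsto (fun k => mulp n (φ (u k))) Filter.atTop (𝓝 b) := by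
        have heq : (fun k => (φₗ ∘ₗ ((Qc M 0 n : A →L[ℂ] A) : A →ₗ[ℂ] A)) (u k)) =
            fun k => mulp n (φ (u k)) := by
          funext k
          exact hkey n (u k)
        rw [← heq]
        exact hTu
      have hex : ∀ k : ℕ, ∃ s ∈ (sepS φₗ : Set B),
          dist (φ (u k)) s < K * ‖u k‖ + 1/((k:ℝ)+1) := by
        intro k
        apply (infDist_lt_iff ⟨0, (sepS φₗ).zero_mem⟩).1
        have h1 : (0:ℝ) < 1/((k:ℝ)+1) := by positivity
        calc infDist (φ (u k)) (sepS φₗ : Set B) ≤ K * ‖u k‖ := hKb (u k)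
          _ < K * ‖u k‖ + 1/((k:ℝ)+1) := by linarith
      choose sk hsk hskd using hex
      have hdiff : Filter.Tendsto (fun k => φ (u k) - sk k) Filter.atTop (𝓝 0) := by
        apply squeeze_zero_norm (a := fun k => K * ‖u k‖ + 1/((k:ℝ)+1))
        · intro k
          rw [← dist_eq_norm]
          exact (hskd k).le
        · have l1 : Filter.Tendsto (fun k : ℕ => K * ‖u k‖) Filter.atTop (𝓝 0) := by
            have := (hu.norm).const_mul K
            simpa using this
          have l2 : Filter.Tendsto (fun k : ℕ => 1/((k:ℝ)+1)) Filter.atTop (𝓝 0) :=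
            tendsto_one_div_add_atTop_nhds_zero_nat
          simpa using l1.add l2
      have h2 : Filter.Tendsto (fun k => mulp n (φ (u k)) - mulp n (sk k))
          Filter.atTop (𝓝 0) := by
        have h2a : (fun k => mulp n (φ (u k)) - mulp n (sk k)) =
            fun k => mulp n (φ (u k) - sk k) := by
          funext k
          rw [hsub]
        rw [h2a]
        have h2b := ((hcont n).tendsto 0).comp hdiff
        have h2c : mulp n 0 = 0 := by
          have := hsub n 0 0
          simpa using this
        rw [h2c] at h2b
        exact h2b
      have h3 : Filter.Tendsto (fun k => mulp n (sk k)) Filter.atTop (𝓝 b) := by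
        have := hTu'.sub h2
        simpa using this
      apply mem_closure_of_tendsto h3
      exact Filter.Eventually.of_forall (fun k => ⟨sk k, by rw [hSeq]; exact hsk k, rfl⟩)
    · apply closure_minimal
      · rintro _ ⟨s, hs, rfl⟩
        rw [hSeq] at hs
        obtain ⟨u, hu, hTu⟩ := mem_sepS.1 hs
        refine mem_sepS.2 ⟨u, hu, ?_⟩
        have h1 : Filter.Tendsto (fun k => mulp n (φ (u k))) Filter.atTop (𝓝 (mulp n s)) :=
          ((hcont n).tendsto s).comp hTu
        have heq : (fun k => (φₗ ∘ₗ ((Qc M 0 n : A →L[ℂ] A) : A →ₗ[ℂ] A)) (u k)) =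
            fun k => mulp n (φ (u k)) := by
          funext k
          exact hkey n (u k)
        rw [heq]
        exact h1
      · exact sepS_isClosed _
  -- left multiplications
  set ML : ℕ → A →L[ℂ] A := fun i => ContinuousLinearMap.mul ℂ A (c i) with hML
  have hkeyL : ∀ n a, φ (Qc ML 0 n a) = ((List.range n).map Bseq).prod * φ a := by
    intro n
    induction n with
    | zero =>
        intro a
        simp [Qc]
    | succ n ih =>
        intro a
        have h1 : Qc ML 0 (n+1) a = Qc ML 0 n (ML n a) := by
          rw [Qc_succ, zero_add]; rfl
        have h2 : ML n a = c n * a := rfl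
        rw [h1, ih, h2, map_mul, hc, List.range_succ]
        simp [mul_assoc]
  -- right multiplications
  set MR : ℕ → A →L[ℂ] A := fun i => (ContinuousLinearMap.mul ℂ A).flip (c i) with hMR
  have hkeyR : ∀ n a, φ (Qc MR 0 n a) = φ a * ((List.range n).map Bseq).reverse.prod := by
    intro n
    induction n with
    | zero =>
        intro a
        simp [Qc]
    | succ n ih =>
        intro a
        have h1 : Qc MR 0 (n+1) a = Qc MR 0 n (MR n a) := by
          rw [Qc_succ, zero_add]; rfl
        have h2 : MR n a = a * c n := rfl
        rw [h1, ih, h2, map_mul, hc, List.range_succ]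
        simp [mul_assoc]
  have idL := main ML Bseq (fun n s => ((List.range n).map Bseq).prod * s)
    (fun n => (continuous_const.mul continuous_id))
    (fun n s₁ s₂ => mul_sub _ _ _) hkeyL
  have idR := main MR Bseq (fun n s => s * ((List.range n).map Bseq).reverse.prod)
    (fun n => (continuous_id.mul continuous_const))
    (fun n s₁ s₂ => sub_mul _ _ _) hkeyR
  obtain ⟨N₁, hN₁⟩ := stab φₗ ML
  obtain ⟨N₂, hN₂⟩ := stab φₗ MR
  refine ⟨max N₁ N₂, fun n hn => ⟨?_, ?_⟩⟩
  · have e1 := idL n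
    have e2 := idL (n+1)
    have e3 := hN₁ n (le_trans (le_max_left _ _) hn)
    rw [← e1, ← e2, e3]
  · have e1 := idR n
    have e2 := idR (n+1)
    have e3 := hN₂ n (le_trans (le_max_right _ _) hn)
    rw [← e1, ← e2, e3]
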